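/- Define P_n(x,y) = Σ_{σ ∈ S_n} Σ_{S : D(σ) ⊆ S ⊆ [n-1]} x^{|S ∩ odd|} y^{|S ∩ even|}, and A_n(x,y) = Σ_{σ ∈ S_n} x^{des₁(σ)} y^{des₀(σ)}. Then P_n(x,y) = (1+x)^{⌊n/2⌋} (1+y)^{⌊(n-1)/2⌋} A_n(x/(1+x), y/(1+y)) as an identity of rational functions, equivalently A_n(x,y) = (1−x)^{⌊n/2⌋}(1−y)^{⌊(n-1)/2⌋} P_n(x/(1−x), y/(1−y)). -/

import Mathlib

def idx1 {n : ℕ} (i : Fin (n - 1)) : Fin n := ⟨i.val, by have := i.isLt; omega⟩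
def idx2 {n : ℕ} (i : Fin (n - 1)) : Fin n := ⟨i.val + 1, by have := i.isLt; omega⟩

def des0 {n : ℕ} (σ : Equiv.Perm (Fin n)) : ℕ :=
  (Finset.univ.filter (fun i : Fin (n - 1) =>
    (i.val + 1) % 2 = 0 ∧ σ (idx2 i) < σ (idx1 i))).card

def des1 {n : ℕ} (σ : Equiv.Perm (Fin n)) : ℕ :=
  (Finset.univ.filter (fun i : Fin (n - 1) =>
    (i.val + 1) % 2 = 1 ∧ σ (idx2 i) < σ (idx1 i))).card

/-- the descent set of `σ`, as a set of (0-based encoded) positions of `[n-1]` -/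
def descentSet {n : ℕ} (σ : Equiv.Perm (Fin n)) : Finset (Fin (n - 1)) :=
  Finset.univ.filter (fun i : Fin (n - 1) => σ (idx2 i) < σ (idx1 i))

/-- `P_n(x,y) = Σ_σ Σ_{D(σ) ⊆ S ⊆ [n-1]} x^{|S∩odd|} y^{|S∩even|}` -/
noncomputable def P (n : ℕ) (x y : ℝ) : ℝ :=
  ∑ σ : Equiv.Perm (Fin n),
    ∑ S ∈ Finset.univ.filter (fun S : Finset (Fin (n - 1)) => descentSet σ ⊆ S),
      x ^ (S.filter (fun i => (i.val + 1) % 2 = 1)).card *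
      y ^ (S.filter (fun i => (i.val + 1) % 2 = 0)).card

/-- `A_n(x,y) = Σ_σ x^{des₁ σ} y^{des₀ σ}` -/
noncomputable def A (n : ℕ) (x y : ℝ) : ℝ :=
  ∑ σ : Equiv.Perm (Fin n), x ^ des1 σ * y ^ des0 σ

open Finset

lemma card_fin_filter (m : ℕ) (p : ℕ → Prop) [DecidablePred p] :
    (Finset.univ.filter (fun i : Fin m => p i.val)).card = ((Finset.range m).filter p).card := by
  rw [Finset.card_filter, Finset.card_filter]
  exact Fin.sum_univ_eq_sum_range (fun j => if p j then 1 else 0) m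

lemma card_range_odd (m : ℕ) : ((Finset.range m).filter (fun i => (i+1)%2 = 1)).card = (m+1)/2 := by
  induction m with
  | zero => simp
  | succ k ih =>
    rw [Finset.range_add_one, Finset.filter_insert]
    by_cases h : (k+1)%2 = 1
    · rw [if_pos h, Finset.card_insert_of_notMem (by simp), ih]; omega
    · rw [if_neg h, ih]; omega

lemma card_range_even (m : ℕ) : ((Finset.range m).filter (fun i => (i+1)%2 = 0)).card = m/2 := by
  induction m with
  | zero => simp
  | succ k ih =>
    rw [Finset.range_add_one, Finset.filter_insert]
    by_cases h : (k+1)%2 = 0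
    · rw [if_pos h, Finset.card_insert_of_notMem (by simp), ih]; omega
    · rw [if_neg h, ih]; omega

-- product of weights
lemma prod_w {m : ℕ} (x y : ℝ) (T : Finset (Fin m)) :
    ∏ i ∈ T, (if (i.val + 1) % 2 = 1 then x else y)
      = x ^ (T.filter (fun i => (i.val + 1) % 2 = 1)).card *
        y ^ (T.filter (fun i => (i.val + 1) % 2 = 0)).card := by
  rw [← Finset.prod_filter_mul_prod_filter_not T (fun i => (i.val + 1) % 2 = 1)]
  congr 1
  · rw [Finset.prod_congr rfl (fun i hi => if_pos (Finset.mem_filter.mp hi).2),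
      Finset.prod_const]
  · rw [Finset.prod_congr rfl (fun i hi => if_neg (Finset.mem_filter.mp hi).2),
      Finset.prod_const]
    congr 2
    exact Finset.filter_congr (fun i _ => by omega)

lemma prod_w1 {m : ℕ} (x y : ℝ) (T : Finset (Fin m)) :
    ∏ i ∈ T, ((if (i.val + 1) % 2 = 1 then x else y) + 1)
      = (x+1) ^ (T.filter (fun i => (i.val + 1) % 2 = 1)).card *
        (y+1) ^ (T.filter (fun i => (i.val + 1) % 2 = 0)).card := by
  have := prod_w (m := m) (x+1) (y+1) T
  rw [← this]
  exact Finset.prod_congr rfl (fun i _ => by split <;> rfl)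

lemma key (n : ℕ) (x y : ℝ) (hx : x + 1 ≠ 0) (hy : y + 1 ≠ 0) :
    P n x y = (1 + x) ^ (n / 2) * (1 + y) ^ ((n - 1) / 2) *
      A n (x / (1 + x)) (y / (1 + y)) := by
  unfold P A
  rw [Finset.mul_sum]
  refine Finset.sum_congr rfl (fun σ _ => ?_)
  set m := n - 1 with hm
  set w : Fin m → ℝ := fun i => if (i.val + 1) % 2 = 1 then x else y with hw
  set D := descentSet σ with hD
  -- count facts
  have hcard1 : (Finset.univ.filter (fun i : Fin m => (i.val + 1) % 2 = 1)).card = n / 2 := by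
    rw [card_fin_filter m (fun j => (j+1)%2 = 1), card_range_odd]; omega
  have hcard0 : (Finset.univ.filter (fun i : Fin m => (i.val + 1) % 2 = 0)).card = (n-1) / 2 := by
    rw [card_fin_filter m (fun j => (j+1)%2 = 0), card_range_even]
  have hd1 : (D.filter (fun i => (i.val + 1) % 2 = 1)).card = des1 σ := by
    rw [hD, descentSet, des1, Finset.filter_filter]
    congr 1
    exact Finset.filter_congr (fun i _ => by tauto)
  have hd0 : (D.filter (fun i => (i.val + 1) % 2 = 0)).card = des0 σ := by
    rw [hD, descentSet, des0, Finset.filter_filter]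
    congr 1
    exact Finset.filter_congr (fun i _ => by tauto)
  -- rewrite summand via prod_w
  have step1 : ∑ S ∈ Finset.univ.filter (fun S : Finset (Fin m) => D ⊆ S),
      x ^ (S.filter (fun i => (i.val + 1) % 2 = 1)).card *
      y ^ (S.filter (fun i => (i.val + 1) % 2 = 0)).card
      = ∑ S ∈ Finset.univ.filter (fun S : Finset (Fin m) => D ⊆ S), ∏ i ∈ S, w i :=
    Finset.sum_congr rfl (fun S _ => (prod_w x y S).symm)
  -- bijection with powerset of complement
  have step2 : ∑ S ∈ Finset.univ.filter (fun S : Finset (Fin m) => D ⊆ S), ∏ i ∈ S, w i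
      = ∑ T ∈ Dᶜ.powerset, ∏ i ∈ (D ∪ T), w i := by
    refine Finset.sum_nbij' (fun S => S \ D) (fun T => D ∪ T) ?_ ?_ ?_ ?_ ?_
    · intro S hS
      rw [Finset.mem_powerset]
      intro i hi
      rw [Finset.mem_compl]
      exact (Finset.mem_sdiff.mp hi).2
    · intro T hT
      simp only [Finset.mem_filter, Finset.mem_univ, true_and]
      exact Finset.subset_union_left
    · intro S hS
      simp only [Finset.mem_filter, Finset.mem_univ, true_and] at hS
      exact Finset.union_sdiff_of_subset hS
    · intro T hT
      rw [Finset.mem_powerset] at hT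
      exact Finset.union_sdiff_cancel_left (Finset.disjoint_left.mpr
        (fun i hiD hiT => absurd hiD (Finset.mem_compl.mp (hT hiT))))
    · intro S hS
      simp only [Finset.mem_filter, Finset.mem_univ, true_and] at hS
      rw [Finset.union_sdiff_of_subset hS]
  have step3 : ∑ T ∈ Dᶜ.powerset, ∏ i ∈ (D ∪ T), w i
      = (∏ i ∈ D, w i) * ∏ i ∈ Dᶜ, (w i + 1) := by
    have hsum : ∀ T ∈ Dᶜ.powerset, ∏ i ∈ (D ∪ T), w i = (∏ i ∈ D, w i) * ∏ i ∈ T, w i := by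
      intro T hT
      rw [Finset.mem_powerset] at hT
      rw [Finset.prod_union]
      exact Finset.disjoint_left.mpr (fun i hiD hiT =>
        absurd hiD (Finset.mem_compl.mp (hT hiT)))
    rw [Finset.sum_congr rfl hsum, ← Finset.mul_sum]
    congr 1
    rw [Finset.prod_add w (fun _ => (1:ℝ)) Dᶜ]
    simp
    rfl
  -- global product
  have hPu : ∏ i ∈ (Finset.univ : Finset (Fin m)), (w i + 1)
      = (x+1) ^ (n/2) * (y+1) ^ ((n-1)/2) := by
    rw [prod_w1, hcard1, hcard0]
  have hsplit : (∏ i ∈ D, (w i + 1)) * ∏ i ∈ Dᶜ, (w i + 1)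
      = (x+1) ^ (n/2) * (y+1) ^ ((n-1)/2) := by
    rw [Finset.prod_mul_prod_compl, hPu]
  have hDprod : ∏ i ∈ D, w i = x ^ des1 σ * y ^ des0 σ := by
    rw [prod_w, hd1, hd0]
  have hDprod1 : ∏ i ∈ D, (w i + 1) = (x+1) ^ des1 σ * (y+1) ^ des0 σ := by
    rw [prod_w1, hd1, hd0]
  rw [step1, step2, step3, hDprod]
  have hcompl : ∏ i ∈ Dᶜ, (w i + 1) =
      ((x+1) ^ (n/2) * (y+1) ^ ((n-1)/2)) / ((x+1) ^ des1 σ * (y+1) ^ des0 σ) := by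
    rw [← hsplit, hDprod1]
    field_simp
  rw [hcompl, div_pow, div_pow]
  have h1 : (1:ℝ) + x = x + 1 := by ring
  have h2 : (1:ℝ) + y = y + 1 := by ring
  rw [h1, h2]
  field_simp

theorem stmt6 (n : ℕ) (x y : ℝ) :
    (x ≠ -1 → y ≠ -1 →
      P n x y =
        (1 + x) ^ (n / 2) * (1 + y) ^ ((n - 1) / 2) *
          A n (x / (1 + x)) (y / (1 + y))) ∧
    (x ≠ 1 → y ≠ 1 →
      A n x y =
        (1 - x) ^ (n / 2) * (1 - y) ^ ((n - 1) / 2) *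
          P n (x / (1 - x)) (y / (1 - y))) := by
  constructor
  · intro hx hy
    exact key n x y (by intro h; apply hx; linarith) (by intro h; apply hy; linarith)
  · intro hx hy
    have hx1 : (1:ℝ) - x ≠ 0 := sub_ne_zero.mpr (Ne.symm hx)
    have hy1 : (1:ℝ) - y ≠ 0 := sub_ne_zero.mpr (Ne.symm hy)
    have hx2 : x / (1 - x) + 1 ≠ 0 := by
      rw [div_add' _ _ _ hx1]
      simp only [ne_eq, div_eq_zero_iff]
      push_neg
      constructor
      · intro h; exact absurd (by linarith : (1:ℝ) - x = 0) hx1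
      · exact hx1
    have hy2 : y / (1 - y) + 1 ≠ 0 := by
      rw [div_add' _ _ _ hy1]
      simp only [ne_eq, div_eq_zero_iff]
      push_neg
      constructor
      · intro h; exact absurd (by linarith : (1:ℝ) - y = 0) hy1
      · exact hy1
    have hk := key n (x / (1 - x)) (y / (1 - y)) hx2 hy2
    have e1 : (1:ℝ) + x / (1 - x) = 1 / (1 - x) := by field_simp; ring
    have e2 : (1:ℝ) + y / (1 - y) = 1 / (1 - y) := by field_simp; ring
    have e3 : x / (1 - x) / (1 / (1 - x)) = x := by field_simp
    have e4 : y / (1 - y) / (1 / (1 - y)) = y := by field_simp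
    rw [e1, e2, e3, e4] at hk
    rw [hk]
    rw [div_pow, div_pow]
    field_simp
    simp
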